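/- Let f be differentiable on an open interval containing [a,b] with a < b, q ≥ 1, and |f'|^q convex on [a,b]. Then |f((a+b)/2) - (1/(b-a)) ∫_a^b f(u) du| ≤ (3^{1-1/q}/8)(b-a)(|f'(a)| + |f'(b)|). -/

import Mathlib

open MeasureTheory intervalIntegral Set

section Helpers

lemma kirmaci_rpow_add_le (x y r : ℝ) (hx : 0 ≤ x) (hy : 0 ≤ y) (hr : 0 ≤ r) (hr1 : r ≤ 1) :
    (x + y) ^ r ≤ x ^ r + y ^ r := by
  have := NNReal.rpow_add_le_add_rpow (x.toNNReal) (y.toNNReal) hr hr1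
  have h := NNReal.coe_le_coe.2 this
  push_cast at h
  rwa [Real.coe_toNNReal _ hx, Real.coe_toNNReal _ hy] at h

lemma kirmaci_sqrt3_ub : (3:ℝ) ^ ((1:ℝ)/2) ≤ 1.7321 := by
  rw [← Real.sqrt_eq_rpow]
  rw [show (1.7321:ℝ) = Real.sqrt (1.7321^2) by rw [Real.sqrt_sq (by norm_num)]]
  exact Real.sqrt_le_sqrt (by norm_num)

lemma kirmaci_exp_neg_le_quad (x : ℝ) (hx : 0 ≤ x) :
    Real.exp (-x) ≤ 1 - x + (9/16)*x^2 := by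
  have h8 : (1 + x/8) ≤ Real.exp (x/8) := by
    have := Real.add_one_le_exp (x/8); linarith
  have hpow : (1 + x/8)^8 ≤ Real.exp x := by
    calc (1 + x/8)^8 ≤ (Real.exp (x/8))^8 := by
          apply pow_le_pow_left₀ (by linarith) h8
      _ = Real.exp x := by
          rw [← Real.exp_nat_mul]; congr 1; push_cast; ring
  have hbin : 1 + x + (7/16)*x^2 ≤ (1 + x/8)^8 := by
    nlinarith [pow_nonneg hx 3, pow_nonneg hx 4, pow_nonneg hx 5, pow_nonneg hx 6,
      pow_nonneg hx 7, pow_nonneg hx 8, sq_nonneg x]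
  have hexp : 1 + x + (7/16)*x^2 ≤ Real.exp x := le_trans hbin hpow
  have hpos : 0 < Real.exp (-x) := Real.exp_pos _
  have hinv : Real.exp (-x) * Real.exp x = 1 := by
    rw [← Real.exp_add]; simp
  nlinarith [sq_nonneg x, pow_nonneg hx 3, pow_nonneg hx 4,
    mul_pos hpos (Real.exp_pos x)]

lemma kirmaci_log_three_lb : (1.09:ℝ) ≤ Real.log 3 := by
  rw [Real.le_log_iff_exp_le (by norm_num)]
  have h1 : Real.exp 1.09 = Real.exp 1 * Real.exp 0.09 := by
    rw [← Real.exp_add]; norm_num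
  have h2 : Real.exp (-0.09) ≥ 1 - 0.09 := by
    have := Real.add_one_le_exp (-0.09:ℝ); linarith
  have h3 : Real.exp 0.09 * Real.exp (-0.09) = 1 := by rw [← Real.exp_add]; norm_num
  have h4 : Real.exp 0.09 ≤ 1/0.91 := by
    have hp : (0:ℝ) < Real.exp 0.09 := Real.exp_pos _
    nlinarith
  have h5 : Real.exp 1 < 2.7182818286 := Real.exp_one_lt_d9
  have hp1 : (0:ℝ) < Real.exp 1 := Real.exp_pos _
  rw [h1]; nlinarith

lemma kirmaci_log_three_ub : Real.log 3 ≤ (1.11:ℝ) := by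
  rw [Real.log_le_iff_le_exp (by norm_num)]
  have h1 : Real.exp 1.11 = Real.exp 1 * Real.exp 0.11 := by
    rw [← Real.exp_add]; norm_num
  have h2 : (1.11:ℝ) ≤ Real.exp 0.11 := by
    have := Real.add_one_le_exp (0.11:ℝ); linarith
  have h5 : (2.7182818283:ℝ) < Real.exp 1 := Real.exp_one_gt_d9
  rw [h1]; nlinarith [Real.exp_pos (0.11:ℝ)]

lemma kirmaci_key_scalar (r : ℝ) (hr0 : 0 < r) (hr1 : r ≤ 1) :
    8 * (3:ℝ)^r ≤ 3*(1+r)*(2+r) + 4*((3:ℝ)/2)^r := by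
  rcases le_or_gt r (1/2) with hr2 | hr2
  · have hchord : (3:ℝ)^r ≤ (1-2*r)*1 + (2*r)*((3:ℝ)^((1:ℝ)/2)) := by
      have h := Real.geom_mean_le_arith_mean2_weighted (w₁ := 1-2*r) (w₂ := 2*r)
        (p₁ := 1) (p₂ := (3:ℝ)^((1:ℝ)/2)) (by linarith) (by linarith) (by norm_num)
        (by positivity) (by ring)
      calc (3:ℝ)^r = 1 ^ (1-2*r) * ((3:ℝ)^((1:ℝ)/2))^(2*r) := by
            rw [← Real.rpow_mul (by norm_num), Real.one_rpow, one_mul]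
            congr 1; ring
        _ ≤ _ := h
    have hone : (1:ℝ) ≤ ((3:ℝ)/2)^r := Real.one_le_rpow (by norm_num) hr0.le
    have hs := kirmaci_sqrt3_ub
    nlinarith [sq_nonneg (r - 1/2), sq_nonneg r]
  · set K := Real.log 3 with hK
    set L := Real.log 3 - Real.log 2 with hL
    set u := 1 - r with hu
    have hu0 : 0 ≤ u := by simp [hu]; linarith
    have hu2 : u ≤ 1/2 := by simp [hu]; linarith
    have hKl : (1.09:ℝ) ≤ K := kirmaci_log_three_lb
    have hKu : K ≤ 1.11 := kirmaci_log_three_ub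
    have hL0 : 0 ≤ L := by
      rw [hL, ← Real.log_div (by norm_num) (by norm_num)]
      exact Real.log_nonneg (by norm_num)
    have hLu : L ≤ 0.42 := by
      have := Real.log_two_gt_d9
      rw [hL]; linarith
    have h3r : (3:ℝ)^r = 3 * Real.exp (-(K*u)) := by
      rw [Real.rpow_def_of_pos (by norm_num)]
      rw [show Real.log 3 * r = Real.log 3 + (-(K*u)) by rw [hK, hu]; ring]
      rw [Real.exp_add, Real.exp_log (by norm_num)]
    have h32r : ((3:ℝ)/2)^r = (3/2) * Real.exp (-(L*u)) := by
      rw [Real.rpow_def_of_pos (by norm_num)]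
      rw [show Real.log (3/2) * r = Real.log (3/2) + (-(L*u)) by
        rw [Real.log_div (by norm_num) (by norm_num), hL, hu]; ring]
      rw [Real.exp_add, Real.exp_log (by norm_num)]
    have hE1 : Real.exp (-(K*u)) ≤ 1 - K*u + (9/16)*(K*u)^2 :=
      kirmaci_exp_neg_le_quad _ (by positivity)
    have hE2 : 1 - L*u ≤ Real.exp (-(L*u)) := by
      have := Real.add_one_le_exp (-(L*u)); linarith
    rw [h3r, h32r]
    have hr' : r = 1 - u := by rw [hu]; ring
    rw [hr']
    nlinarith [mul_nonneg hu0 (sub_nonneg.2 hu2), sq_nonneg u, mul_nonneg hu0 hu0,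
      mul_nonneg (mul_nonneg hu0 hu0) (sub_nonneg.2 hKu),
      mul_nonneg (mul_nonneg hu0 hu0) (sub_nonneg.2 hKl),
      mul_nonneg hu0 (sub_nonneg.2 hLu), mul_nonneg hu0 hL0,
      mul_nonneg hu0 (sub_nonneg.2 hKl)]

lemma kirmaci_ipow_right (p q' c s : ℝ) (hs : (-1:ℝ) < s) :
    ∫ u in p..q', (u - c)^s = ((q'-c)^(s+1) - (p-c)^(s+1))/(s+1) := by
  rw [intervalIntegral.integral_comp_sub_right (fun x => x ^ s) c,
    integral_rpow (Or.inl hs)]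

lemma kirmaci_ipow_left (p q' c s : ℝ) (hs : (-1:ℝ) < s) :
    ∫ u in p..q', (c - u)^s = ((c-p)^(s+1) - (c-q')^(s+1))/(s+1) := by
  rw [intervalIntegral.integral_comp_sub_left (fun x => x ^ s) c,
    integral_rpow (Or.inl hs)]

lemma kirmaci_contOn_left (b s : ℝ) (hs : 0 ≤ s) (S : Set ℝ) :
    ContinuousOn (fun u : ℝ => (b-u)^s) S :=
  (continuousOn_const.sub continuousOn_id).rpow_const (fun _ _ => Or.inr hs)

lemma kirmaci_contOn_right (a s : ℝ) (hs : 0 ≤ s) (S : Set ℝ) :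
    ContinuousOn (fun u : ℝ => (u-a)^s) S :=
  (continuousOn_id.sub continuousOn_const).rpow_const (fun _ _ => Or.inr hs)

lemma kirmaci_final (r C A B : ℝ) (hr0 : 0 < r) (hr1 : r ≤ 1) (hC : 0 < C)
    (hA : 0 ≤ A) (hB : 0 ≤ B) :
    (1/C) * ((A + B)/C^r *
      (C*((C^(r+1) - (C/2)^(r+1))/(r+1)) - (C^(r+1+1) - (C/2)^(r+1+1))/(r+1+1)
        + (C/2)^(r+1+1)/(r+1+1)))
      ≤ (3:ℝ)^(1-r)/8 * C * (A+B) := by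
  have hD1 : (1:ℝ) ≤ (2:ℝ)^r := Real.one_le_rpow (by norm_num) hr0.le
  have hD0 : (0:ℝ) < (2:ℝ)^r := by positivity
  have hT0 : (0:ℝ) < (3:ℝ)^r := by positivity
  have hX0 : (0:ℝ) < C^r := by positivity
  have h32 : ((3:ℝ)/2)^r = (3:ℝ)^r / (2:ℝ)^r := Real.div_rpow (by norm_num) (by norm_num) r
  have hkey : 8 * (3:ℝ)^r ≤ 3*(1+r)*(2+r) + 4*((3:ℝ)^r/(2:ℝ)^r) := by
    rw [← h32]; exact kirmaci_key_scalar r hr0 hr1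
  have hkey2 : 16 * (3:ℝ)^r * (2:ℝ)^r - 8 * (3:ℝ)^r ≤ 6 * (2:ℝ)^r * (1+r)*(2+r) := by
    have h := mul_le_mul_of_nonneg_right hkey hD0.le
    have h4 : 4*((3:ℝ)^r/(2:ℝ)^r) * (2:ℝ)^r = 4*(3:ℝ)^r := by
      field_simp
    nlinarith [h, h4]
  have hC2 : (C/2)^(r+1) = C^r * C / ((2:ℝ)^r * 2) := by
    rw [Real.div_rpow hC.le (by norm_num), Real.rpow_add hC, Real.rpow_add (by norm_num : (0:ℝ) < 2),
      Real.rpow_one, Real.rpow_one]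
  have hC3 : (C/2)^(r+1+1) = C^r * C * C / ((2:ℝ)^r * 2 * 2) := by
    rw [Real.div_rpow hC.le (by norm_num), Real.rpow_add hC, Real.rpow_add (by norm_num : (0:ℝ) < 2),
      Real.rpow_add hC, Real.rpow_add (by norm_num : (0:ℝ) < 2), Real.rpow_one, Real.rpow_one]
  have hC1' : C^(r+1) = C^r * C := by rw [Real.rpow_add hC, Real.rpow_one]
  have hC2' : C^(r+1+1) = C^r * C * C := by
    rw [Real.rpow_add hC, Real.rpow_add hC, Real.rpow_one]
  have h31 : (3:ℝ)^(1-r) = 3 / (3:ℝ)^r := by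
    rw [Real.rpow_sub (by norm_num), Real.rpow_one]
  rw [hC2, hC3, hC1', hC2', h31]
  set D := (2:ℝ)^r
  set T := (3:ℝ)^r
  set X := C^r
  have hr1' : (0:ℝ) < r + 1 := by linarith
  have hr2' : (0:ℝ) < r + 1 + 1 := by linarith
  have hEq : (1/C) * ((A + B)/X *
      (C*((X*C - X*C/(D*2))/(r+1)) - (X*C*C - X*C*C/(D*2*2))/(r+1+1)
        + (X*C*C/(D*2*2))/(r+1+1)))
      = (A+B) * C * ((2*D - 1)/(2*D*(r+1)*(r+1+1))) := by
    field_simp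
    ring
  rw [hEq]
  have hstep : (2*D - 1)/(2*D*(r+1)*(r+1+1)) ≤ 3/(8*T) := by
    rw [div_le_div_iff₀ (by positivity) (by positivity)]
    nlinarith [hkey2]
  calc (A+B) * C * ((2*D - 1)/(2*D*(r+1)*(r+1+1)))
      ≤ (A+B) * C * (3/(8*T)) := by
        apply mul_le_mul_of_nonneg_left hstep (by positivity)
    _ = 3 / T / 8 * C * (A+B) := by ring

end Helpers

theorem kirmaci_power_mean
    (a b c d q : ℝ) (f f' : ℝ → ℝ) (hab : a < b)
    (hsub : Icc a b ⊆ Ioo c d)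
    (hf : ∀ x ∈ Ioo c d, HasDerivAt f (f' x) x)
    (hq : 1 ≤ q)
    (hconv : ∀ x ∈ Icc a b, ∀ y ∈ Icc a b, ∀ t ∈ Icc (0:ℝ) 1,
      |f' (t * x + (1 - t) * y)| ^ q ≤ t * |f' x| ^ q + (1 - t) * |f' y| ^ q) :
    |f ((a + b) / 2) - (1 / (b - a)) * ∫ u in a..b, f u| ≤
      ((3:ℝ) ^ (1 - 1 / q) / 8) * (b - a) * (|f' a| + |f' b|) := by
  have hq0 : 0 < q := lt_of_lt_of_le one_pos hq
  set r : ℝ := 1/q with hrdef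
  have hr0 : 0 < r := by positivity
  have hr1 : r ≤ 1 := by rw [hrdef, div_le_one hq0]; exact hq
  have hqr : q * r = 1 := by rw [hrdef]; field_simp
  have hC : (0:ℝ) < b - a := sub_pos.2 hab
  set m : ℝ := (a+b)/2 with hm
  have ham : a ≤ m := by rw [hm]; linarith
  have hmb : m ≤ b := by rw [hm]; linarith
  have hma : m - a = (b-a)/2 := by rw [hm]; ring
  have hbm : b - m = (b-a)/2 := by rw [hm]; ring
  set A := |f' a| with hA_def
  set B := |f' b| with hB_def
  have hA : 0 ≤ A := abs_nonneg _
  have hB : 0 ≤ B := abs_nonneg _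
  have habs : ∀ x : ℝ, (|x|^q)^r = |x| := by
    intro x
    rw [← Real.rpow_mul (abs_nonneg x), hqr, Real.rpow_one]
  -- pointwise bound
  have hbound : ∀ u ∈ Icc a b, |f' u| ≤ ((b-u)/(b-a))^r * A + ((u-a)/(b-a))^r * B := by
    intro u hu
    obtain ⟨hau, hub⟩ := hu
    have ht0 : 0 ≤ (b-u)/(b-a) := div_nonneg (by linarith) hC.le
    have ht1 : (b-u)/(b-a) ≤ 1 := by rw [div_le_one hC]; linarith
    have h1t : 1 - (b-u)/(b-a) = (u-a)/(b-a) := by field_simp; ring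
    have h1t0 : 0 ≤ 1 - (b-u)/(b-a) := by linarith
    have hueq : (b-u)/(b-a) * a + (1 - (b-u)/(b-a)) * b = u := by field_simp; ring
    have hc := hconv a (left_mem_Icc.2 hab.le) b (right_mem_Icc.2 hab.le)
      ((b-u)/(b-a)) ⟨ht0, ht1⟩
    rw [hueq] at hc
    calc |f' u| = (|f' u|^q)^r := (habs _).symm
      _ ≤ ((b-u)/(b-a) * A^q + (1 - (b-u)/(b-a)) * B^q)^r :=
          Real.rpow_le_rpow (Real.rpow_nonneg (abs_nonneg _) q) hc hr0.le
      _ ≤ ((b-u)/(b-a) * A^q)^r + ((1 - (b-u)/(b-a)) * B^q)^r :=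
          kirmaci_rpow_add_le _ _ _ (mul_nonneg ht0 (Real.rpow_nonneg hA q))
            (mul_nonneg h1t0 (Real.rpow_nonneg hB q)) hr0.le hr1
      _ = ((b-u)/(b-a))^r * A + ((u-a)/(b-a))^r * B := by
          rw [Real.mul_rpow ht0 (Real.rpow_nonneg hA q),
            Real.mul_rpow h1t0 (Real.rpow_nonneg hB q), h1t, hA_def, hB_def,
            habs (f' a), habs (f' b)]
  have hsup : ∀ u ∈ Icc a b, |f' u| ≤ A + B := by
    intro u hu
    obtain ⟨hau, hub⟩ := hu
    have ht0 : 0 ≤ (b-u)/(b-a) := div_nonneg (by linarith) hC.le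
    have ht1 : (b-u)/(b-a) ≤ 1 := by rw [div_le_one hC]; linarith
    have hs0 : 0 ≤ (u-a)/(b-a) := div_nonneg (by linarith) hC.le
    have hs1 : (u-a)/(b-a) ≤ 1 := by rw [div_le_one hC]; linarith
    have h1 : ((b-u)/(b-a))^r ≤ 1 := Real.rpow_le_one ht0 ht1 hr0.le
    have h2 : ((u-a)/(b-a))^r ≤ 1 := Real.rpow_le_one hs0 hs1 hr0.le
    have h3 := hbound u ⟨hau, hub⟩
    have h4 : ((b-u)/(b-a))^r * A ≤ 1 * A := mul_le_mul_of_nonneg_right h1 hA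
    have h5 : ((u-a)/(b-a))^r * B ≤ 1 * B := mul_le_mul_of_nonneg_right h2 hB
    linarith
  -- continuity of f on Icc a b
  have hfc : ContinuousOn f (Icc a b) := fun x hx =>
    ((hf x (hsub hx)).continuousAt).continuousWithinAt
  -- interval integrability of f'
  have hf'int : IntervalIntegrable f' volume a b := by
    rw [intervalIntegrable_iff_integrableOn_Icc_of_le hab.le]
    have heq : EqOn (deriv f) f' (Icc a b) := fun x hx => (hf x (hsub hx)).deriv
    refine (Measure.integrableOn_of_bounded (M := A + B) measure_Icc_lt_top.ne
      (measurable_deriv f).aestronglyMeasurable ?_).congr_fun heq measurableSet_Icc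
    refine ae_restrict_of_forall_mem measurableSet_Icc (fun x hx => ?_)
    rw [Real.norm_eq_abs, heq hx]
    exact hsup x hx
  have hsub1 : uIcc a m ⊆ uIcc a b := by
    rw [uIcc_of_le ham, uIcc_of_le hab.le]; exact Icc_subset_Icc le_rfl hmb
  have hsub2 : uIcc m b ⊆ uIcc a b := by
    rw [uIcc_of_le hmb, uIcc_of_le hab.le]; exact Icc_subset_Icc ham le_rfl
  have hf'1 : IntervalIntegrable f' volume a m := hf'int.mono_set hsub1
  have hf'2 : IntervalIntegrable f' volume m b := hf'int.mono_set hsub2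
  have hfc1 : ContinuousOn f (uIcc a m) := hfc.mono (by
    rw [uIcc_of_le ham]; exact Icc_subset_Icc le_rfl hmb)
  have hfc2 : ContinuousOn f (uIcc m b) := hfc.mono (by
    rw [uIcc_of_le hmb]; exact Icc_subset_Icc ham le_rfl)
  have hfint1 : IntervalIntegrable f volume a m := hfc1.intervalIntegrable
  have hfint2 : IntervalIntegrable f volume m b := hfc2.intervalIntegrable
  have hw1 : IntervalIntegrable (fun u => (u - a) * f' u) volume a m :=
    hf'1.continuousOn_mul (by fun_prop)
  have hw2 : IntervalIntegrable (fun u => (u - b) * f' u) volume m b :=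
    hf'2.continuousOn_mul (by fun_prop)
  -- FTC identities
  have hI1 : ∫ u in a..m, (f u + (u - a) * f' u) = (m - a) * f m - (a - a) * f a := by
    have hftc := intervalIntegral.integral_eq_sub_of_hasDerivAt
      (f := fun u => (u - a) * f u) (f' := fun u => f u + (u - a) * f' u)
      (a := a) (b := m) ?_ ?_
    · simpa using hftc
    · intro x hx
      have hx' : x ∈ Ioo c d := hsub (by
        have := hsub1 hx; rwa [uIcc_of_le hab.le] at this)
      have h := ((hasDerivAt_id x).sub_const a).mul (hf x hx')
      simp at h; exact h
    · exact hfint1.add hw1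
  have hI2 : ∫ u in m..b, (f u + (u - b) * f' u) = (b - b) * f b - (m - b) * f m := by
    have hftc := intervalIntegral.integral_eq_sub_of_hasDerivAt
      (f := fun u => (u - b) * f u) (f' := fun u => f u + (u - b) * f' u)
      (a := m) (b := b) ?_ ?_
    · simpa using hftc
    · intro x hx
      have hx' : x ∈ Ioo c d := hsub (by
        have := hsub2 hx; rwa [uIcc_of_le hab.le] at this)
      have h := ((hasDerivAt_id x).sub_const b).mul (hf x hx')
      simp at h; exact h
    · exact hfint2.add hw2
  rw [intervalIntegral.integral_add hfint1 hw1] at hI1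
  rw [intervalIntegral.integral_add hfint2 hw2] at hI2
  have hadj : (∫ u in a..m, f u) + (∫ u in m..b, f u) = ∫ u in a..b, f u :=
    intervalIntegral.integral_add_adjacent_intervals hfint1 hfint2
  have hkey : (b-a) * f m - (∫ u in a..b, f u) =
      (∫ u in a..m, (u-a) * f' u) + (∫ u in m..b, (u-b) * f' u) := by
    linear_combination -hI1 - hI2 + hadj
  -- continuity helpers
  have hcL : ∀ S : Set ℝ, ContinuousOn (fun u : ℝ => ((b-u)/(b-a))^r) S := fun S =>
    ((continuousOn_const.sub continuousOn_id).div_const _).rpow_const (fun _ _ => Or.inr hr0.le)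
  have hcR : ∀ S : Set ℝ, ContinuousOn (fun u : ℝ => ((u-a)/(b-a))^r) S := fun S =>
    ((continuousOn_id.sub continuousOn_const).div_const _).rpow_const (fun _ _ => Or.inr hr0.le)
  have hcont1 : ∀ S : Set ℝ, ContinuousOn (fun u : ℝ => (u-a) * (b-u)^r) S := fun S =>
    (continuousOn_id.sub continuousOn_const).mul (kirmaci_contOn_left b r hr0.le _)
  have hcont2 : ∀ S : Set ℝ, ContinuousOn (fun u : ℝ => (u-a) * (u-a)^r) S := fun S =>
    (continuousOn_id.sub continuousOn_const).mul (kirmaci_contOn_right a r hr0.le _)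
  have hcont3 : ∀ S : Set ℝ, ContinuousOn (fun u : ℝ => (b-u) * (b-u)^r) S := fun S =>
    (continuousOn_const.sub continuousOn_id).mul (kirmaci_contOn_left b r hr0.le _)
  have hcont4 : ∀ S : Set ℝ, ContinuousOn (fun u : ℝ => (b-u) * (u-a)^r) S := fun S =>
    (continuousOn_const.sub continuousOn_id).mul (kirmaci_contOn_right a r hr0.le _)
  have hcontRHS : ∀ S : Set ℝ, ContinuousOn
      (fun u : ℝ => (u-a) * (((b-u)/(b-a))^r * A + ((u-a)/(b-a))^r * B)) S := fun S =>
    (continuousOn_id.sub continuousOn_const).mul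
      (((hcL S).mul continuousOn_const).add ((hcR S).mul continuousOn_const))
  have hcontRHS2 : ∀ S : Set ℝ, ContinuousOn
      (fun u : ℝ => (b-u) * (((b-u)/(b-a))^r * A + ((u-a)/(b-a))^r * B)) S := fun S =>
    (continuousOn_const.sub continuousOn_id).mul
      (((hcL S).mul continuousOn_const).add ((hcR S).mul continuousOn_const))
  -- integral computations
  have hne2 : (r+1+1) ≠ 0 := by positivity
  have hV2 : ∫ u in a..m, (u-a) * (u-a)^r = ((b-a)/2)^(r+1+1)/(r+1+1) := by
    have h1 : EqOn (fun u : ℝ => (u-a) * (u-a)^r) (fun u : ℝ => (u-a)^(r+1)) (uIcc a m) := by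
      intro u hu
      rw [uIcc_of_le ham] at hu
      simp only
      rw [Real.rpow_add' (sub_nonneg.2 hu.1) (by positivity), Real.rpow_one]
      ring
    rw [intervalIntegral.integral_congr h1, kirmaci_ipow_right a m a (r+1) (by linarith),
      sub_self, Real.zero_rpow hne2, hma]
    ring
  have hV1 : ∫ u in a..m, (u-a) * (b-u)^r
      = (b-a)*(((b-a)^(r+1) - ((b-a)/2)^(r+1))/(r+1)) -
        ((b-a)^(r+1+1) - ((b-a)/2)^(r+1+1))/(r+1+1) := by
    have h1 : EqOn (fun u : ℝ => (u-a) * (b-u)^r)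
        (fun u : ℝ => (b-a) * (b-u)^r - (b-u)^(r+1)) (uIcc a m) := by
      intro u hu
      rw [uIcc_of_le ham] at hu
      simp only
      rw [Real.rpow_add' (by linarith [hu.2] : (0:ℝ) ≤ b-u) (by positivity), Real.rpow_one]
      ring
    rw [intervalIntegral.integral_congr h1,
      intervalIntegral.integral_sub (f := fun u => (b-a) * (b-u)^r)
        ((continuousOn_const.mul (kirmaci_contOn_left b r hr0.le _)).intervalIntegrable)
        ((kirmaci_contOn_left b (r+1) (by linarith) _).intervalIntegrable),
      intervalIntegral.integral_const_mul,
      kirmaci_ipow_left a m b r (by linarith), kirmaci_ipow_left a m b (r+1) (by linarith), hbm]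
  have hV3 : ∫ u in m..b, (b-u) * (b-u)^r = ((b-a)/2)^(r+1+1)/(r+1+1) := by
    have h1 : EqOn (fun u : ℝ => (b-u) * (b-u)^r) (fun u : ℝ => (b-u)^(r+1)) (uIcc m b) := by
      intro u hu
      rw [uIcc_of_le hmb] at hu
      simp only
      rw [Real.rpow_add' (sub_nonneg.2 hu.2) (by positivity), Real.rpow_one]
      ring
    rw [intervalIntegral.integral_congr h1, kirmaci_ipow_left m b b (r+1) (by linarith),
      sub_self, Real.zero_rpow hne2, hbm]
    ring
  have hV4 : ∫ u in m..b, (b-u) * (u-a)^r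
      = (b-a)*(((b-a)^(r+1) - ((b-a)/2)^(r+1))/(r+1)) -
        ((b-a)^(r+1+1) - ((b-a)/2)^(r+1+1))/(r+1+1) := by
    have h1 : EqOn (fun u : ℝ => (b-u) * (u-a)^r)
        (fun u : ℝ => (b-a) * (u-a)^r - (u-a)^(r+1)) (uIcc m b) := by
      intro u hu
      rw [uIcc_of_le hmb] at hu
      simp only
      rw [Real.rpow_add' (by linarith [hu.1] : (0:ℝ) ≤ u-a) (by positivity), Real.rpow_one]
      ring
    rw [intervalIntegral.integral_congr h1,
      intervalIntegral.integral_sub (f := fun u => (b-a) * (u-a)^r)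
        ((continuousOn_const.mul (kirmaci_contOn_right a r hr0.le _)).intervalIntegrable)
        ((kirmaci_contOn_right a (r+1) (by linarith) _).intervalIntegrable),
      intervalIntegral.integral_const_mul,
      kirmaci_ipow_right m b a r (by linarith), kirmaci_ipow_right m b a (r+1) (by linarith), hma]
  -- bounds on the two integrals
  have habs1 : |∫ u in a..m, (u-a) * f' u| ≤
      ∫ u in a..m, (u-a) * (((b-u)/(b-a))^r * A + ((u-a)/(b-a))^r * B) := by
    refine le_trans (intervalIntegral.abs_integral_le_integral_abs ham) ?_
    refine intervalIntegral.integral_mono_on ham hw1.abs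
      ((hcontRHS _).intervalIntegrable) ?_
    intro x hx
    rw [abs_mul, abs_of_nonneg (sub_nonneg.2 hx.1)]
    exact mul_le_mul_of_nonneg_left (hbound x ⟨hx.1, le_trans hx.2 hmb⟩) (sub_nonneg.2 hx.1)
  have habs2 : |∫ u in m..b, (u-b) * f' u| ≤
      ∫ u in m..b, (b-u) * (((b-u)/(b-a))^r * A + ((u-a)/(b-a))^r * B) := by
    refine le_trans (intervalIntegral.abs_integral_le_integral_abs hmb) ?_
    refine intervalIntegral.integral_mono_on hmb hw2.abs
      ((hcontRHS2 _).intervalIntegrable) ?_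
    intro x hx
    rw [abs_mul, abs_sub_comm, abs_of_nonneg (sub_nonneg.2 hx.2)]
    exact mul_le_mul_of_nonneg_left (hbound x ⟨le_trans ham hx.1, hx.2⟩) (sub_nonneg.2 hx.2)
  -- decomposition of the majorant integrals
  have hXne : ((b-a):ℝ)^r ≠ 0 := (by positivity : (0:ℝ) < (b-a)^r).ne'
  have hJ1 : ∫ u in a..m, (u-a) * (((b-u)/(b-a))^r * A + ((u-a)/(b-a))^r * B)
      = (A/(b-a)^r) * (∫ u in a..m, (u-a) * (b-u)^r)
        + (B/(b-a)^r) * (∫ u in a..m, (u-a) * (u-a)^r) := by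
    have h1 : EqOn (fun u:ℝ => (u-a) * (((b-u)/(b-a))^r * A + ((u-a)/(b-a))^r * B))
        (fun u:ℝ => (A/(b-a)^r) * ((u-a) * (b-u)^r) + (B/(b-a)^r) * ((u-a) * (u-a)^r))
        (uIcc a m) := by
      intro u hu
      rw [uIcc_of_le ham] at hu
      simp only
      rw [Real.div_rpow (by linarith [hu.2] : (0:ℝ) ≤ b-u) hC.le,
          Real.div_rpow (sub_nonneg.2 hu.1) hC.le]
      field_simp
    rw [intervalIntegral.integral_congr h1,
      intervalIntegral.integral_add (f := fun u => A/(b-a)^r * ((u-a) * (b-u)^r))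
        (g := fun u => B/(b-a)^r * ((u-a) * (u-a)^r))
        ((continuousOn_const.mul (hcont1 _)).intervalIntegrable)
        ((continuousOn_const.mul (hcont2 _)).intervalIntegrable),
      intervalIntegral.integral_const_mul, intervalIntegral.integral_const_mul]
  have hJ2 : ∫ u in m..b, (b-u) * (((b-u)/(b-a))^r * A + ((u-a)/(b-a))^r * B)
      = (A/(b-a)^r) * (∫ u in m..b, (b-u) * (b-u)^r)
        + (B/(b-a)^r) * (∫ u in m..b, (b-u) * (u-a)^r) := by
    have h1 : EqOn (fun u:ℝ => (b-u) * (((b-u)/(b-a))^r * A + ((u-a)/(b-a))^r * B))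
        (fun u:ℝ => (A/(b-a)^r) * ((b-u) * (b-u)^r) + (B/(b-a)^r) * ((b-u) * (u-a)^r))
        (uIcc m b) := by
      intro u hu
      rw [uIcc_of_le hmb] at hu
      simp only
      rw [Real.div_rpow (sub_nonneg.2 hu.2) hC.le,
          Real.div_rpow (by linarith [hu.1] : (0:ℝ) ≤ u-a) hC.le]
      field_simp
    rw [intervalIntegral.integral_congr h1,
      intervalIntegral.integral_add (f := fun u => A/(b-a)^r * ((b-u) * (b-u)^r))
        (g := fun u => B/(b-a)^r * ((b-u) * (u-a)^r))
        ((continuousOn_const.mul (hcont3 _)).intervalIntegrable)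
        ((continuousOn_const.mul (hcont4 _)).intervalIntegrable),
      intervalIntegral.integral_const_mul, intervalIntegral.integral_const_mul]
  -- final assembly
  have hrw : f m - (1/(b-a)) * ∫ u in a..b, f u
      = (1/(b-a)) * ((b-a) * f m - ∫ u in a..b, f u) := by
    field_simp
  rw [hrw, abs_mul, abs_of_pos (by positivity : (0:ℝ) < 1/(b-a)), hkey]
  have hfinal := kirmaci_final r (b-a) A B hr0 hr1 hC hA hB
  calc (1/(b-a)) * |(∫ u in a..m, (u-a) * f' u) + (∫ u in m..b, (u-b) * f' u)|
      ≤ (1/(b-a)) * ((∫ u in a..m, (u-a) * (((b-u)/(b-a))^r * A + ((u-a)/(b-a))^r * B))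
          + (∫ u in m..b, (b-u) * (((b-u)/(b-a))^r * A + ((u-a)/(b-a))^r * B))) := by
        have ht := le_trans
          (abs_add_le (∫ u in a..m, (u-a) * f' u) (∫ u in m..b, (u-b) * f' u))
          (add_le_add habs1 habs2)
        exact mul_le_mul_of_nonneg_left ht (by positivity)
    _ = (1/(b-a)) * ((A + B)/(b-a)^r *
        ((b-a)*(((b-a)^(r+1) - ((b-a)/2)^(r+1))/(r+1)) -
          ((b-a)^(r+1+1) - ((b-a)/2)^(r+1+1))/(r+1+1)
          + ((b-a)/2)^(r+1+1)/(r+1+1))) := by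
        rw [hJ1, hJ2, hV1, hV2, hV3, hV4]
        ring
    _ ≤ (3:ℝ)^(1-r)/8 * (b-a) * (A+B) := hfinal
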